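/- Let Z_1,…,Z_k ∈ ℝ^d satisfy the r*-spread condition around μ for some r* > 0, let ε > 0, and let T be a natural number with T ≥ 50·log(‖μ‖/ε). Suppose x_0 = 0 and for each t ∈ {0,…,T−1}: d_t > 0, there exists a unit vector v_t ∈ ℝ^d with |{i : ⟨Z_i − x_t, v_t⟩ ≥ d_t}| ≥ 0.9·k, for every r > d_t and every unit vector v it holds that |{i : ⟨Z_i − x_t, v⟩ ≥ r}| < 0.9·k, and x_{t+1} = x_t + (1/4)·d_t·v_t; let the same two properties of d_T, v_T hold at t = T. Let t* ∈ {0,…,T} be an index minimizing d_t and set x* = x_{t*}. Then ‖x* − μ‖ ≤ max(2·ε, 6·r*). -/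

import Mathlib

noncomputable section

/-- `Z₁,…,Z_k` satisfy the `r`-spread condition around `μ`: along every unit direction `v`,
the number of indices with `⟨Z i − μ, v⟩ ≥ r` is at most `0.05·k`. -/
def SpreadCond {k D : ℕ} (Z : Fin k → EuclideanSpace ℝ (Fin D))
    (μ : EuclideanSpace ℝ (Fin D)) (r : ℝ) : Prop :=
  ∀ v : EuclideanSpace ℝ (Fin D), ‖v‖ = 1 →
    (({i : Fin k | r ≤ (inner ℝ (Z i - μ) v : ℝ)}).ncard : ℝ) ≤ 0.05 * k

set_option maxHeartbeats 1600000 in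
theorem stmt6 {k D : ℕ} (Z : Fin k → EuclideanSpace ℝ (Fin D))
    (μ : EuclideanSpace ℝ (Fin D)) (rstar : ℝ) (hrstar : 0 < rstar)
    (hspread : SpreadCond Z μ rstar)
    (ε : ℝ) (hε : 0 < ε)
    (T : ℕ) (hT : 50 * Real.log (‖μ‖ / ε) ≤ (T : ℝ))
    (x : ℕ → EuclideanSpace ℝ (Fin D)) (d : ℕ → ℝ)
    (v : ℕ → EuclideanSpace ℝ (Fin D))
    (hx0 : x 0 = 0)
    (hdpos : ∀ t, t < T → 0 < d t)
    (hunit : ∀ t, t ≤ T → ‖v t‖ = 1)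
    (hlow : ∀ t, t ≤ T →
      (0.9 : ℝ) * k ≤ (({i : Fin k | d t ≤ (inner ℝ (Z i - x t) (v t) : ℝ)}).ncard : ℝ))
    (hup : ∀ t, t ≤ T → ∀ r : ℝ, d t < r → ∀ u : EuclideanSpace ℝ (Fin D), ‖u‖ = 1 →
      (({i : Fin k | r ≤ (inner ℝ (Z i - x t) u : ℝ)}).ncard : ℝ) < 0.9 * k)
    (hstep : ∀ t, t < T → x (t + 1) = x t + ((1 / 4 : ℝ) * d t) • v t)
    (tstar : ℕ) (htstar : tstar ≤ T) (hmin : ∀ t, t ≤ T → d tstar ≤ d t) :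
    ‖x tstar - μ‖ ≤ max (2 * ε) (6 * rstar) := by
  by_cases hD : D = 0
  · subst hD
    have hz : x tstar - μ = 0 := Subsingleton.elim _ _
    rw [hz, norm_zero]
    have : 0 < max (2 * ε) (6 * rstar) := lt_max_of_lt_left (by linarith)
    linarith
  have hDpos : 0 < D := Nat.pos_of_ne_zero hD
  set e0 : EuclideanSpace ℝ (Fin D) := EuclideanSpace.single ⟨0, hDpos⟩ 1 with he0
  have he0norm : ‖e0‖ = 1 := by simp [he0, EuclideanSpace.norm_single]
  by_cases hk : k = 0
  · exfalso
    have h1 := hup 0 (Nat.zero_le T) (d 0 + 1) (by linarith) e0 he0norm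
    have h2 : (0:ℝ) ≤ (({i : Fin k | d 0 + 1 ≤ (inner ℝ (Z i - x 0) e0 : ℝ)}).ncard : ℝ) :=
      Nat.cast_nonneg _
    subst hk; push_cast at h1; linarith
  have hk1 : (1:ℝ) ≤ k := by exact_mod_cast Nat.one_le_iff_ne_zero.mpr hk
  have hcompl : ∀ A : Set (Fin k), ((Aᶜ).ncard : ℝ) = k - A.ncard := by
    intro A
    have h : A.ncard + Aᶜ.ncard = k := by
      rw [Set.ncard_add_ncard_compl, Nat.card_eq_fintype_card, Fintype.card_fin]
    have h2 := congrArg (Nat.cast (R := ℝ)) h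
    push_cast at h2; linarith
  -- Claim B: the iterate is within d t + rstar of μ
  have claimB : ∀ t, t ≤ T → ‖x t - μ‖ ≤ d t + rstar := by
    intro t ht
    by_contra hcon
    push_neg at hcon
    obtain ⟨u, hu1, hu2⟩ : ∃ u : EuclideanSpace ℝ (Fin D), ‖u‖ = 1 ∧
        (inner ℝ (μ - x t) u : ℝ) = ‖x t - μ‖ := by
      by_cases hxt : x t = μ
      · exact ⟨e0, he0norm, by simp [hxt]⟩
      · refine ⟨‖μ - x t‖⁻¹ • (μ - x t),
          norm_smul_inv_norm (sub_ne_zero.mpr (Ne.symm hxt)), ?_⟩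
        rw [real_inner_smul_right, real_inner_self_eq_norm_sq, norm_sub_rev]
        have hne : ‖x t - μ‖ ≠ 0 := norm_ne_zero_iff.mpr (sub_ne_zero.mpr hxt)
        field_simp
    set r := (d t + (‖x t - μ‖ - rstar)) / 2 with hr
    have hrd : d t < r := by rw [hr]; linarith
    have hsp := hspread (-u) (by rw [norm_neg]; exact hu1)
    set C := {i : Fin k | rstar ≤ (inner ℝ (Z i - μ) (-u) : ℝ)} with hC
    have hsub : Cᶜ ⊆ {i : Fin k | r ≤ (inner ℝ (Z i - x t) u : ℝ)} := by
      intro i hi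
      simp only [hC, Set.mem_compl_iff, Set.mem_setOf_eq, not_le] at hi
      rw [inner_neg_right] at hi
      simp only [Set.mem_setOf_eq]
      have hdec : Z i - x t = (Z i - μ) + (μ - x t) := by abel
      rw [hdec, inner_add_left, hu2, hr]
      linarith
    have hcc : (0.95:ℝ) * k ≤ ((Cᶜ).ncard : ℝ) := by
      rw [hcompl C]; linarith
    have hle : ((Cᶜ).ncard : ℝ) ≤
        (({i : Fin k | r ≤ (inner ℝ (Z i - x t) u : ℝ)}).ncard : ℝ) := by
      exact_mod_cast Set.ncard_le_ncard hsub (Set.toFinite _)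
    have := hup t ht r hrd u hu1
    linarith
  -- a good index exists at every time
  have hexists : ∀ t, t ≤ T → ∃ i : Fin k,
      d t ≤ (inner ℝ (Z i - x t) (v t) : ℝ) ∧ (inner ℝ (Z i - μ) (v t) : ℝ) < rstar := by
    intro t ht
    have hA := hlow t ht
    have hB := hspread (v t) (hunit t ht)
    by_contra hcon
    push_neg at hcon
    have hsub : {i : Fin k | d t ≤ (inner ℝ (Z i - x t) (v t) : ℝ)} ⊆
        {i : Fin k | rstar ≤ (inner ℝ (Z i - μ) (v t) : ℝ)} := by
      intro i hi
      simp only [Set.mem_setOf_eq] at hi ⊢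
      exact hcon i hi
    have h1 := Set.ncard_le_ncard hsub (Set.toFinite _)
    have h2 : (({i : Fin k | d t ≤ (inner ℝ (Z i - x t) (v t) : ℝ)}).ncard : ℝ) ≤
        (({i : Fin k | rstar ≤ (inner ℝ (Z i - μ) (v t) : ℝ)}).ncard : ℝ) := by
      exact_mod_cast h1
    linarith
  -- Claim C: the step direction points towards μ
  have claimC : ∀ t, t ≤ T → d t - rstar ≤ (inner ℝ (μ - x t) (v t) : ℝ) := by
    intro t ht
    obtain ⟨i, h1, h2⟩ := hexists t ht
    have hdec : Z i - x t = (Z i - μ) + (μ - x t) := by abel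
    rw [hdec, inner_add_left] at h1
    linarith
  -- Claim A: d t is not much larger than the distance to μ
  have claimA : ∀ t, t ≤ T → d t ≤ ‖x t - μ‖ + rstar := by
    intro t ht
    obtain ⟨i, h1, h2⟩ := hexists t ht
    have hdec : Z i - x t = (Z i - μ) + (μ - x t) := by abel
    rw [hdec, inner_add_left] at h1
    have hcs : (inner ℝ (μ - x t) (v t) : ℝ) ≤ ‖μ - x t‖ * ‖v t‖ := real_inner_le_norm _ _
    rw [hunit t ht, mul_one, norm_sub_rev] at hcs
    linarith
  by_contra hcon
  push_neg at hcon
  have hmax1 : 2 * ε < ‖x tstar - μ‖ := lt_of_le_of_lt (le_max_left _ _) hcon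
  have hmax2 : 6 * rstar < ‖x tstar - μ‖ := lt_of_le_of_lt (le_max_right _ _) hcon
  have hBstar := claimB tstar htstar
  have hd5 : 5 * rstar < d tstar := by linarith
  have hd2e : 2 * ε - rstar < d tstar := by linarith
  -- contraction
  have hcontr : ∀ t, t < T → ‖x (t+1) - μ‖ ≤ (7/8) * ‖x t - μ‖ := by
    intro t ht
    have htT : t ≤ T := le_of_lt ht
    have hdt : d tstar ≤ d t := hmin t htT
    have hdpos' : 0 < d t := by linarith
    have hBt := claimB t htT
    have hCt := claimC t htT
    have hr5 : 5 * rstar ≤ d t := by linarith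
    have hstep' : x (t+1) - μ = (x t - μ) + ((1/4 : ℝ) * d t) • v t := by
      rw [hstep t ht]; exact add_sub_right_comm _ _ _
    have hsq : ‖x (t+1) - μ‖^2 = ‖x t - μ‖^2 +
        2 * ((1/4) * d t * (inner ℝ (x t - μ) (v t) : ℝ)) + ((1/4) * d t)^2 := by
      rw [hstep', norm_add_sq_real, real_inner_smul_right, norm_smul, Real.norm_eq_abs,
        hunit t htT, mul_one, abs_of_pos (by linarith : (0:ℝ) < (1/4) * d t)]
    have hip : (inner ℝ (x t - μ) (v t) : ℝ) ≤ -(d t - rstar) := by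
      have hneg : (inner ℝ (μ - x t) (v t) : ℝ) = - (inner ℝ (x t - μ) (v t) : ℝ) := by
        rw [← inner_neg_left, neg_sub]
      linarith
    have habs : ‖x (t+1) - μ‖^2 ≤ ((7/8) * ‖x t - μ‖)^2 := by
      rw [hsq]
      nlinarith [norm_nonneg (x t - μ), mul_le_mul_of_nonneg_left hip (le_of_lt hdpos'),
        mul_le_mul hBt hBt (norm_nonneg (x t - μ)) (by linarith : (0:ℝ) ≤ d t + rstar),
        mul_pos hdpos' hdpos']
    have hsr := Real.sqrt_le_sqrt habs
    rwa [Real.sqrt_sq (norm_nonneg _), Real.sqrt_sq (by positivity)] at hsr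
  -- geometric decay
  have hiter : ∀ t, t ≤ T → ‖x t - μ‖ ≤ (7/8)^t * ‖μ‖ := by
    intro t
    induction t with
    | zero => intro _; simp [hx0]
    | succ n ih =>
      intro hn
      have hnT : n < T := hn
      have h1 := hcontr n hnT
      have h2 := ih (le_of_lt hnT)
      calc ‖x (n+1) - μ‖ ≤ (7/8) * ‖x n - μ‖ := h1
        _ ≤ (7/8) * ((7/8)^n * ‖μ‖) := by linarith
        _ = (7/8)^(n+1) * ‖μ‖ := by ring
  have hDT := hiter T le_rfl
  have hAT := claimA T le_rfl
  have hdT : d tstar ≤ d T := hmin T le_rfl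
  have hDTlb1 : 4 * rstar < ‖x T - μ‖ := by linarith
  have hDTlb2 : 2 * ε - 2 * rstar < ‖x T - μ‖ := by linarith
  have hDTgt : ε < ‖x T - μ‖ := by linarith
  have hub : ‖x T - μ‖ ≤ ε := by
    by_cases hμ : ‖μ‖ ≤ ε
    · have hp1 : (7/8:ℝ)^T ≤ 1 := pow_le_one₀ (by norm_num) (by norm_num)
      have := mul_le_of_le_one_left (norm_nonneg μ) hp1
      linarith
    · push_neg at hμ
      have hμpos : 0 < ‖μ‖ := lt_trans hε hμ
      have h87 : (1:ℝ)/50 ≤ Real.log (8/7) := by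
        have h3 : Real.exp 1 ≤ (8/7:ℝ)^(50:ℕ) := by
          have he := Real.exp_one_lt_d9
          have h350 : (3:ℝ) ≤ (8/7:ℝ)^(50:ℕ) := by norm_num
          linarith
        have hl := Real.log_le_log (Real.exp_pos 1) h3
        rw [Real.log_exp, Real.log_pow] at hl
        push_cast at hl
        linarith
      have hlog : Real.log (‖μ‖/ε) ≤ T * Real.log (8/7) := by
        have hT0 : (0:ℝ) ≤ (T:ℝ) := Nat.cast_nonneg T
        nlinarith
      have hratio : ‖μ‖/ε ≤ (8/7:ℝ)^T := by
        have h1 : Real.log (‖μ‖/ε) ≤ Real.log ((8/7:ℝ)^T) := by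
          rw [Real.log_pow]; push_cast; linarith
        have h2 : 0 < ‖μ‖/ε := div_pos hμpos hε
        exact (Real.log_le_log_iff h2 (pow_pos (by norm_num) T)).mp h1
      have hpowinv : (7/8:ℝ)^T * (8/7:ℝ)^T = 1 := by
        rw [← mul_pow]; norm_num
      have hμle : ‖μ‖ ≤ ε * (8/7:ℝ)^T := by
        rw [div_le_iff₀ hε] at hratio; linarith
      calc ‖x T - μ‖ ≤ (7/8)^T * ‖μ‖ := hDT
        _ ≤ (7/8)^T * (ε * (8/7)^T) :=
            mul_le_mul_of_nonneg_left hμle (pow_nonneg (by norm_num) T)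
        _ = ε * ((7/8:ℝ)^T * (8/7:ℝ)^T) := by ring
        _ = ε := by rw [hpowinv, mul_one]
  linarith
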